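/- Let S₁,…,Sₙ be pairwise disjoint polyominoes in ℤ×ℤ, each of which is orthogonally convex. Then unidirectional translational orderings exist in both axis directions: there is a permutation σ of {1,…,n} such that for all k < l and every natural number s, S_{σ(k)} + (s,0) is disjoint from S_{σ(l)}, and there is a permutation τ of {1,…,n} such that for all k < l and every natural number s, S_{τ(k)} + (0,s) is disjoint from S_{τ(l)}. -/

import Mathlib

/-- Two cells of `ℤ × ℤ` are edge-adjacent iff they are at Euclidean distance 1. -/
def EdgeAdj (c d : ℤ × ℤ) : Prop := (c.1 - d.1).natAbs + (c.2 - d.2).natAbs = 1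

/-- A polyomino: a finite nonempty edge-connected set of cells. -/
def IsPolyomino (S : Finset (ℤ × ℤ)) : Prop :=
  S.Nonempty ∧ ∀ c ∈ S, ∀ d ∈ S,
    Relation.ReflTransGen (fun a b => a ∈ S ∧ b ∈ S ∧ EdgeAdj a b) c d

/-- `S` is y-monotone: every row of `S` is an interval of `ℤ`. -/
def YMonotone (S : Finset (ℤ × ℤ)) : Prop :=
  ∀ r a b c : ℤ, (a, r) ∈ S → (c, r) ∈ S → a ≤ b → b ≤ c → (b, r) ∈ S

/-- `S` is x-monotone: every column of `S` is an interval of `ℤ`. -/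
def XMonotone (S : Finset (ℤ × ℤ)) : Prop :=
  ∀ c a b d : ℤ, (c, a) ∈ S → (c, d) ∈ S → a ≤ b → b ≤ d → (c, b) ∈ S

/-- `S` is orthogonally convex: it is both x-monotone and y-monotone. -/
def OrthoConvex (S : Finset (ℤ × ℤ)) : Prop := XMonotone S ∧ YMonotone S

/-- The translate `S + (s, t)`. -/
def translateBy (S : Finset (ℤ × ℤ)) (s t : ℤ) : Finset (ℤ × ℤ) :=
  S.image fun c => (c.1 + s, c.2 + t)

namespace UTOAux

def Lft (S T : Finset (ℤ × ℤ)) (r : ℤ) : Prop :=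
  ∀ a b : ℤ, (a, r) ∈ S → (b, r) ∈ T → a < b

lemma dichotomy {S T : Finset (ℤ × ℤ)} (hS : YMonotone S) (hT : YMonotone T)
    (hd : Disjoint S T) {r a b : ℤ} (ha : (a, r) ∈ S) (hb : (b, r) ∈ T) :
    Lft S T r ∨ Lft T S r := by
  by_cases h : Lft S T r
  · exact Or.inl h
  · right
    rw [Lft] at h
    push_neg at h
    obtain ⟨a', b', ha', hb', hle⟩ := h
    intro b0 a0 hb0 ha0
    by_contra hc
    push_neg at hc
    rcases le_or_gt b0 a' with h1 | h1
    · exact Finset.disjoint_left.mp hd (hS r a0 b0 a' ha0 ha' hc h1) hb0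
    · exact Finset.disjoint_left.mp hd ha' (hT r b' a' b0 hb' hb0 hle h1.le)

lemma row_of_path {S : Finset (ℤ × ℤ)} {t : ℤ} {c d : ℤ × ℤ}
    (h : Relation.ReflTransGen (fun a b => a ∈ S ∧ b ∈ S ∧ EdgeAdj a b) c d)
    (hd : d ∈ S) (h2 : t ≤ d.2) : c.2 ≤ t → ∃ e, (e, t) ∈ S := by
  induction h using Relation.ReflTransGen.head_induction_on with
  | refl =>
    intro h1
    have ht : t = d.2 := le_antisymm h2 h1
    exact ⟨d.1, by rw [ht]; exact hd⟩
  | @head a b hab hbd ih =>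
    intro h1
    rcases le_or_gt t a.2 with h3 | h3
    · have ht : t = a.2 := le_antisymm h3 h1
      exact ⟨a.1, by rw [ht]; exact hab.1⟩
    · apply ih
      have := hab.2.2
      unfold EdgeAdj at this
      omega

lemma col_of_path {S : Finset (ℤ × ℤ)} {t : ℤ} {c d : ℤ × ℤ}
    (h : Relation.ReflTransGen (fun a b => a ∈ S ∧ b ∈ S ∧ EdgeAdj a b) c d)
    (h2 : t + 1 ≤ d.2) : c.2 ≤ t → ∃ e, (e, t) ∈ S ∧ (e, t + 1) ∈ S := by
  induction h using Relation.ReflTransGen.head_induction_on with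
  | refl => intro h1; omega
  | @head a b hab hbd ih =>
    intro h1
    rcases le_or_gt b.2 t with h3 | h3
    · exact ih h3
    · have hE := hab.2.2
      unfold EdgeAdj at hE
      have ha2 : a.2 = t := by omega
      have hb2 : b.2 = t + 1 := by omega
      have h11 : a.1 = b.1 := by omega
      refine ⟨a.1, ?_, ?_⟩
      · rw [← ha2]; exact hab.1
      · rw [h11, ← hb2]; exact hab.2.1

lemma row_between {S : Finset (ℤ × ℤ)} (hp : IsPolyomino S) {a r b r' t : ℤ}
    (ha : (a, r) ∈ S) (hb : (b, r') ∈ S) (h1 : r ≤ t) (h2 : t ≤ r') :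
    ∃ c, (c, t) ∈ S :=
  row_of_path (hp.2 _ ha _ hb) hb h2 h1

lemma shared_col {S : Finset (ℤ × ℤ)} (hp : IsPolyomino S) {a b t : ℤ}
    (ha : (a, t) ∈ S) (hb : (b, t + 1) ∈ S) :
    ∃ c, (c, t) ∈ S ∧ (c, t + 1) ∈ S :=
  col_of_path (hp.2 _ ha _ hb) (le_refl _) (le_refl t)

lemma Lft_step {S T : Finset (ℤ × ℤ)} (hpS : IsPolyomino S) (hpT : IsPolyomino T)
    (hS : YMonotone S) (hT : YMonotone T) (hd : Disjoint S T) {t : ℤ}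
    (hS0 : ∃ x, (x, t) ∈ S) (hS1 : ∃ x, (x, t + 1) ∈ S)
    (hT0 : ∃ x, (x, t) ∈ T) (hT1 : ∃ x, (x, t + 1) ∈ T) :
    (Lft S T t → Lft S T (t + 1)) ∧ (Lft S T (t + 1) → Lft S T t) := by
  obtain ⟨a0, ha0⟩ := hS0; obtain ⟨a1, ha1⟩ := hS1
  obtain ⟨b0, hb0⟩ := hT0; obtain ⟨b1, hb1⟩ := hT1
  obtain ⟨cS, hcS0, hcS1⟩ := shared_col hpS ha0 ha1
  obtain ⟨cT, hcT0, hcT1⟩ := shared_col hpT hb0 hb1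
  constructor
  · intro h
    have hlt : cS < cT := h _ _ hcS0 hcT0
    rcases dichotomy hS hT hd hcS1 hcT1 with h' | h'
    · exact h'
    · exact absurd (h' _ _ hcT1 hcS1) (by omega)
  · intro h
    have hlt : cS < cT := h _ _ hcS1 hcT1
    rcases dichotomy hS hT hd hcS0 hcT0 with h' | h'
    · exact h'
    · exact absurd (h' _ _ hcT0 hcS0) (by omega)

lemma Lft_transport {S T : Finset (ℤ × ℤ)} (hpS : IsPolyomino S) (hpT : IsPolyomino T)
    (hS : YMonotone S) (hT : YMonotone T) (hd : Disjoint S T) {r r' : ℤ}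
    {aS aS' bT bT' : ℤ}
    (hSr : (aS, r) ∈ S) (hSr' : (aS', r') ∈ S)
    (hTr : (bT, r) ∈ T) (hTr' : (bT', r') ∈ T)
    (h : Lft S T r) : Lft S T r' := by
  rcases le_total r r' with hle | hle
  · have key : ∀ k : ℕ, r + k ≤ r' → Lft S T (r + k) := by
      intro k
      induction k with
      | zero => intro _; simpa using h
      | succ k ih =>
        intro h1
        have h1' : r + k + 1 ≤ r' := by push_cast at h1 ⊢; omega
        have h0 : r + k ≤ r' := by omega
        have e : (r + (k + 1 : ℕ)) = (r + k) + 1 := by push_cast; ring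
        rw [e]
        exact (Lft_step hpS hpT hS hT hd
          (row_between hpS hSr hSr' (by omega) h0)
          (row_between hpS hSr hSr' (by omega) h1')
          (row_between hpT hTr hTr' (by omega) h0)
          (row_between hpT hTr hTr' (by omega) h1')).1 (ih h0)
    have e : r' = r + ((r' - r).toNat : ℤ) := by omega
    rw [e]; exact key _ (by omega)
  · have key : ∀ k : ℕ, r' ≤ r - k → Lft S T (r - k) := by
      intro k
      induction k with
      | zero => intro _; simpa using h
      | succ k ih =>
        intro h1
        have h1' : r' ≤ r - k - 1 := by push_cast at h1 ⊢; omega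
        have h0 : r' ≤ r - k := by omega
        have e : (r - (k + 1 : ℕ)) = (r - k) - 1 := by push_cast; ring
        have e2 : (r - k) - 1 + 1 = r - k := by ring
        rw [e]
        have := (Lft_step hpS hpT hS hT hd (t := r - k - 1)
          (row_between hpS hSr' hSr h1' (by omega))
          (by rw [e2]; exact row_between hpS hSr' hSr h0 (by omega))
          (row_between hpT hTr' hTr h1' (by omega))
          (by rw [e2]; exact row_between hpT hTr' hTr h0 (by omega))).2
        rw [e2] at this
        exact this (ih h0)
    have e : r' = r - ((r - r').toNat : ℤ) := by omega
    rw [e]; exact key _ (by omega)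

def Rel2 (S T : Finset (ℤ × ℤ)) : Prop := ∃ r a b : ℤ, (a, r) ∈ S ∧ (b, r) ∈ T ∧ a < b

lemma Lft_of_rel2 {S T : Finset (ℤ × ℤ)} (hpS : IsPolyomino S) (hpT : IsPolyomino T)
    (hS : YMonotone S) (hT : YMonotone T) (hd : Disjoint S T)
    (hrel : Rel2 S T) {r' aS bT : ℤ} (hSr' : (aS, r') ∈ S) (hTr' : (bT, r') ∈ T) :
    Lft S T r' := by
  obtain ⟨r, a, b, haS, hbT, hab⟩ := hrel
  rcases dichotomy hS hT hd haS hbT with h | h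
  · exact Lft_transport hpS hpT hS hT hd haS hSr' hbT hTr' h
  · exact absurd (h _ _ hbT haS) (by omega)

lemma rel2_asymm {S T : Finset (ℤ × ℤ)} (hpS : IsPolyomino S) (hpT : IsPolyomino T)
    (hS : YMonotone S) (hT : YMonotone T) (hd : Disjoint S T)
    (h1 : Rel2 S T) (h2 : Rel2 T S) : False := by
  obtain ⟨r, b, a, hbT, haS, hba⟩ := h2
  have := Lft_of_rel2 hpS hpT hS hT hd h1 haS hbT
  have := this _ _ haS hbT
  omega


lemma topo_list {α : Type*} [DecidableEq α] (R : α → α → Prop)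
    (hsink : ∀ A : Finset α, A.Nonempty → ∃ i ∈ A, ∀ j ∈ A, ¬ R i j) :
    ∀ A : Finset α, ∃ L : List α, L.Nodup ∧ (∀ x, x ∈ L ↔ x ∈ A) ∧
      ∀ (p q : ℕ) (hp : p < L.length) (hq : q < L.length), p < q →
        ¬ R (L.get ⟨p, hp⟩) (L.get ⟨q, hq⟩) := by
  intro A
  induction A using Finset.strongInduction with
  | _ A ih =>
    rcases A.eq_empty_or_nonempty with rfl | hA
    · exact ⟨[], by simp, by simp, by simp⟩
    · obtain ⟨i, hiA, hi⟩ := hsink A hA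
      obtain ⟨L, hnd, hmem, hord⟩ := ih (A.erase i) (Finset.erase_ssubset hiA)
      have hiL : i ∉ L := by
        intro hc
        have := (hmem i).mp hc
        simp at this
      refine ⟨i :: L, ?_, ?_, ?_⟩
      · exact List.nodup_cons.mpr ⟨hiL, hnd⟩
      · intro x
        simp only [List.mem_cons, hmem, Finset.mem_erase]
        constructor
        · rintro (rfl | ⟨_, h⟩)
          · exact hiA
          · exact h
        · intro hx
          rcases eq_or_ne x i with rfl | hne
          · exact Or.inl rfl
          · exact Or.inr ⟨hne, hx⟩
      · intro p q hp hq hpq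
        match p, q with
        | 0, 0 => omega
        | 0, q + 1 =>
          have hmem' : (i :: L).get ⟨q + 1, hq⟩ ∈ A := by
            have : L.get ⟨q, by simpa using hq⟩ ∈ L := List.get_mem _ _
            have := (hmem _).mp this
            simpa using (Finset.mem_of_mem_erase this)
          exact hi _ hmem'
        | p + 1, 0 => omega
        | p + 1, q + 1 =>
          exact hord p q (by simpa using hp) (by simpa using hq) (by omega)

lemma topo_perm {n : ℕ} (R : Fin n → Fin n → Prop)
    (hsink : ∀ A : Finset (Fin n), A.Nonempty → ∃ i ∈ A, ∀ j ∈ A, ¬ R i j) :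
    ∃ σ : Equiv.Perm (Fin n), ∀ k l : Fin n, k < l → ¬ R (σ k) (σ l) := by
  obtain ⟨L, hnd, hmem, hord⟩ := topo_list R hsink Finset.univ
  have hlen : L.length = n := by
    have h1 : L.toFinset = Finset.univ := by
      ext x; simp [hmem]
    have := congrArg Finset.card h1
    rwa [List.toFinset_card_of_nodup hnd, Finset.card_univ, Fintype.card_fin] at this
  let f : Fin n → Fin n := fun k => L.get ⟨k.1, by rw [hlen]; exact k.2⟩
  have hinj : Function.Injective f := by
    intro a b hab
    have := List.nodup_iff_injective_get.mp hnd hab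
    exact Fin.ext (by simpa using congrArg Fin.val this)
  obtain ⟨σ, hσ⟩ : ∃ σ : Equiv.Perm (Fin n), ∀ k, σ k = f k :=
    ⟨Equiv.ofBijective f (Finite.injective_iff_bijective.mp hinj), fun k => rfl⟩
  refine ⟨σ, fun k l hkl => ?_⟩
  rw [hσ, hσ]
  exact hord k.1 l.1 _ _ hkl



theorem UTO_x (n : ℕ) (S : Fin n → Finset (ℤ × ℤ))
    (hpoly : ∀ i, IsPolyomino (S i))
    (hdisj : Pairwise fun i j => Disjoint (S i) (S j))
    (hymon : ∀ i, YMonotone (S i)) :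
    ∃ σ : Equiv.Perm (Fin n), ∀ k l : Fin n, k < l → ∀ s : ℕ,
      Disjoint (translateBy (S (σ k)) s 0) (S (σ l)) := by
  classical
  set R : Fin n → Fin n → Prop := fun i j => i ≠ j ∧ Rel2 (S i) (S j) with hR
  have hasymm : ∀ i j, R i j → R j i → False := by
    rintro i j ⟨hne, h1⟩ ⟨_, h2⟩
    exact rel2_asymm (hpoly i) (hpoly j) (hymon i) (hymon j) (hdisj hne) h1 h2
  have hrowsne : ∀ i, ((S i).image Prod.snd).Nonempty := fun i => (hpoly i).1.image _
  set minr : Fin n → ℤ := fun i => ((S i).image Prod.snd).min' (hrowsne i) with hminr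
  have hrow_iff : ∀ (i : Fin n) (r : ℤ), r ∈ (S i).image Prod.snd ↔ ∃ a, (a, r) ∈ S i := by
    intro i r
    simp only [Finset.mem_image]
    constructor
    · rintro ⟨⟨a, b⟩, hm, rfl⟩; exact ⟨a, hm⟩
    · rintro ⟨a, ha⟩; exact ⟨(a, r), ha, rfl⟩
  have NoCycle : ∀ m : ℕ, ∀ g : ℕ → Fin n, 1 ≤ m →
      (∀ k < m, R (g k) (g (k + 1))) → g m = g 0 → False := by
    intro m
    induction m using Nat.strong_induction_on with
    | _ m ih =>
      intro g hm hstep hclose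
      rcases eq_or_lt_of_le hm with h1 | h1
      · exact (hstep 0 (by omega)).1 (by rw [← h1] at hclose; exact hclose.symm)
      by_cases hrep : ∃ a b, a < b ∧ b ≤ m ∧ ¬(a = 0 ∧ b = m) ∧ g a = g b
      · obtain ⟨a, b, hab, hbm, hnab, heq⟩ := hrep
        refine ih (b - a) (by omega) (fun k => g (a + k)) (by omega) ?_ ?_
        · intro k hk
          have h := hstep (a + k) (by omega)
          show R (g (a + k)) (g (a + (k + 1)))
          rwa [show a + (k + 1) = (a + k) + 1 by omega]
        · show g (a + (b - a)) = g (a + 0)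
          rw [show a + (b - a) = b by omega, Nat.add_zero]
          exact heq.symm
      push_neg at hrep
      rcases eq_or_lt_of_le (Nat.succ_le_of_lt h1) with h2 | h2
      · -- m = 2
        have e1 := hstep 0 (by omega)
        have e2 := hstep 1 (by omega)
        have hclose2 : g 2 = g 0 := by rw [← h2] at hclose; exact hclose
        rw [show (1:ℕ) + 1 = 2 from rfl, hclose2] at e2
        exact hasymm _ _ e1 e2
      -- m ≥ 3
      obtain ⟨t, htm, htmax⟩ := Finset.exists_max_image (Finset.range m)
        (fun k => minr (g k)) ⟨0, Finset.mem_range.mpr (by omega)⟩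
      rw [Finset.mem_range] at htm
      have bridge : ∀ p q, p < m → q < m → p ≠ q →
          R (g p) (g t) → R (g t) (g q) → R (g p) (g q) := by
        intro p q hpm hqm hpq e1 e2
        have hne : g p ≠ g q := by
          rcases lt_or_gt_of_ne hpq with h | h
          · exact hrep p q h (by omega) (by omega)
          · exact (hrep q p h (by omega) (by omega)).symm
        obtain ⟨r1, a1, b1, ha1, hb1, _⟩ := e1.2
        obtain ⟨r2, a2, b2, ha2, hb2, _⟩ := e2.2
        obtain ⟨xt, hxt⟩ := (hrow_iff (g t) _).mp (Finset.min'_mem _ (hrowsne (g t)))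
        have hLr_le_r1 : minr (g t) ≤ r1 := Finset.min'_le _ _ ((hrow_iff _ _).mpr ⟨b1, hb1⟩)
        have hLr_le_r2 : minr (g t) ≤ r2 := Finset.min'_le _ _ ((hrow_iff _ _).mpr ⟨a2, ha2⟩)
        have hminp : minr (g p) ≤ minr (g t) := htmax p (Finset.mem_range.mpr hpm)
        have hminq : minr (g q) ≤ minr (g t) := htmax q (Finset.mem_range.mpr hqm)
        obtain ⟨mp, hmp⟩ := (hrow_iff (g p) _).mp (Finset.min'_mem _ (hrowsne (g p)))
        obtain ⟨mq, hmq⟩ := (hrow_iff (g q) _).mp (Finset.min'_mem _ (hrowsne (g q)))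
        obtain ⟨xp, hxp⟩ := row_between (hpoly (g p)) hmp ha1 hminp hLr_le_r1
        obtain ⟨xq, hxq⟩ := row_between (hpoly (g q)) hmq hb2 hminq hLr_le_r2
        have L1 : Lft (S (g p)) (S (g t)) (minr (g t)) :=
          Lft_of_rel2 (hpoly _) (hpoly _) (hymon _) (hymon _) (hdisj e1.1) e1.2 hxp hxt
        have L2 : Lft (S (g t)) (S (g q)) (minr (g t)) :=
          Lft_of_rel2 (hpoly _) (hpoly _) (hymon _) (hymon _) (hdisj e2.1) e2.2 hxt hxq
        have hlt1 := L1 _ _ hxp hxt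
        have hlt2 := L2 _ _ hxt hxq
        exact ⟨hne, minr (g t), xp, xq, hxp, hxq, by omega⟩
      rcases eq_or_ne t 0 with rfl | ht0
      · -- t = 0
        have e1 : R (g (m - 1)) (g 0) := by
          have h := hstep (m - 1) (by omega)
          rwa [show m - 1 + 1 = m by omega, hclose] at h
        have e2 : R (g 0) (g 1) := hstep 0 (by omega)
        have enew : R (g (m - 1)) (g 1) := bridge _ _ (by omega) (by omega) (by omega) e1 e2
        refine ih (m - 1) (by omega) (fun k => if k = m - 1 then g 1 else g (k + 1))
          (by omega) ?_ ?_
        · intro k hk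
          show R (if k = m - 1 then g 1 else g (k + 1))
            (if k + 1 = m - 1 then g 1 else g (k + 1 + 1))
          rcases eq_or_ne k (m - 2) with rfl | hk2
          · rw [if_neg (by omega), if_pos (by omega), show m - 2 + 1 = m - 1 by omega]
            exact enew
          · rw [if_neg (by omega), if_neg (by omega)]
            exact hstep (k + 1) (by omega)
        · show (if m - 1 = m - 1 then g 1 else _) = (if 0 = m - 1 then g 1 else g (0 + 1))
          rw [if_pos rfl, if_neg (by omega)]
      rcases eq_or_ne t (m - 1) with rfl | ht1
      · -- t = m - 1
        have e1 : R (g (m - 2)) (g (m - 1)) := by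
          have h := hstep (m - 2) (by omega)
          rwa [show m - 2 + 1 = m - 1 by omega] at h
        have e2 : R (g (m - 1)) (g 0) := by
          have h := hstep (m - 1) (by omega)
          rwa [show m - 1 + 1 = m by omega, hclose] at h
        have enew : R (g (m - 2)) (g 0) := bridge _ _ (by omega) (by omega) (by omega) e1 e2
        refine ih (m - 1) (by omega) (fun k => if k = m - 1 then g 0 else g k)
          (by omega) ?_ ?_
        · intro k hk
          show R (if k = m - 1 then g 0 else g k) (if k + 1 = m - 1 then g 0 else g (k + 1))
          rcases eq_or_ne k (m - 2) with rfl | hk2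
          · rw [if_neg (by omega), if_pos (by omega)]
            exact enew
          · rw [if_neg (by omega), if_neg (by omega)]
            exact hstep k (by omega)
        · show (if m - 1 = m - 1 then g 0 else _) = (if 0 = m - 1 then g 0 else g 0)
          rw [if_pos rfl, if_neg (by omega)]
      · -- 0 < t < m - 1
        have e1 : R (g (t - 1)) (g t) := by
          have h := hstep (t - 1) (by omega)
          rwa [show t - 1 + 1 = t by omega] at h
        have e2 : R (g t) (g (t + 1)) := hstep t (by omega)
        have enew : R (g (t - 1)) (g (t + 1)) :=
          bridge _ _ (by omega) (by omega) (by omega) e1 e2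
        refine ih (m - 1) (by omega) (fun k => if k < t then g k else g (k + 1))
          (by omega) ?_ ?_
        · intro k hk
          show R (if k < t then g k else g (k + 1)) (if k + 1 < t then g (k + 1) else g (k + 1 + 1))
          rcases lt_trichotomy (k + 1) t with h3 | h3 | h3
          · rw [if_pos (by omega), if_pos h3]
            exact hstep k (by omega)
          · rw [if_pos (by omega), if_neg (by omega), show k = t - 1 by omega,
              show t - 1 + 1 = t by omega]
            exact enew
          · rw [if_neg (by omega), if_neg (by omega)]
            exact hstep (k + 1) (by omega)
        · show (if m - 1 < t then g (m - 1) else g (m - 1 + 1)) = (if 0 < t then g 0 else g (0 + 1))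
          rw [if_neg (by omega), if_pos (by omega), show m - 1 + 1 = m by omega]
          exact hclose
  have hsink : ∀ A : Finset (Fin n), A.Nonempty → ∃ i ∈ A, ∀ j ∈ A, ¬ R i j := by
    intro A hA
    by_contra hno
    push_neg at hno
    choose! g hgA hgR using hno
    obtain ⟨i0, hi0⟩ := hA
    set f : ℕ → Fin n := fun k => Nat.rec i0 (fun _ x => g x) k with hf
    have hfA : ∀ k, f k ∈ A := by
      intro k
      induction k with
      | zero => exact hi0
      | succ k ih => exact hgA _ ih
    have hfstep : ∀ k, R (f k) (f (k + 1)) := fun k => hgR _ (hfA k)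
    obtain ⟨a, b, hab, heq⟩ : ∃ a b, a < b ∧ f a = f b := by
      obtain ⟨a, b, hne, heq⟩ := Finite.exists_ne_map_eq_of_infinite f
      rcases hne.lt_or_gt with h | h
      · exact ⟨a, b, h, heq⟩
      · exact ⟨b, a, h, heq.symm⟩
    refine NoCycle (b - a) (fun k => f (a + k)) (by omega) ?_ ?_
    · intro k hk
      have h := hfstep (a + k)
      show R (f (a + k)) (f (a + (k + 1)))
      rwa [show a + (k + 1) = a + k + 1 by omega]
    · show f (a + (b - a)) = f (a + 0)
      rw [show a + (b - a) = b by omega, Nat.add_zero]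
      exact heq.symm
  obtain ⟨σ, hσ⟩ := topo_perm R hsink
  refine ⟨σ, fun k l hkl s => ?_⟩
  have hne : σ k ≠ σ l := fun h => absurd (σ.injective h) (ne_of_lt hkl)
  rw [Finset.disjoint_left]
  intro x hx hx'
  simp only [translateBy, Finset.mem_image] at hx
  obtain ⟨c, hc, rfl⟩ := hx
  rcases Nat.eq_zero_or_pos s with rfl | hs
  · have hcc : ((c.1 + ((0:ℕ):ℤ), c.2 + 0)) = c := by simp
    rw [hcc] at hx'
    exact Finset.disjoint_left.mp (hdisj hne) hc hx'
  · have hx'' : (c.1 + (s:ℤ), c.2) ∈ S (σ l) := by simpa using hx'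
    exact hσ k l hkl ⟨hne, c.2, c.1, c.1 + (s:ℤ), hc, hx'', by omega⟩

end UTOAux

/-- A system of pairwise disjoint orthogonally convex polyominoes admits unidirectional
translational orderings in both axis directions. -/
theorem orthoconvex_exists_UTO_both_directions (n : ℕ) (S : Fin n → Finset (ℤ × ℤ))
    (hpoly : ∀ i, IsPolyomino (S i))
    (hdisj : Pairwise fun i j => Disjoint (S i) (S j))
    (hconv : ∀ i, OrthoConvex (S i)) :
    (∃ σ : Equiv.Perm (Fin n), ∀ k l : Fin n, k < l → ∀ s : ℕ,
      Disjoint (translateBy (S (σ k)) s 0) (S (σ l))) ∧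
    (∃ τ : Equiv.Perm (Fin n), ∀ k l : Fin n, k < l → ∀ s : ℕ,
      Disjoint (translateBy (S (τ k)) 0 s) (S (τ l))) := by
  constructor
  · exact UTOAux.UTO_x n S hpoly hdisj (fun i => (hconv i).2)
  · set T : Fin n → Finset (ℤ × ℤ) := fun i => (S i).image (fun c => (c.2, c.1)) with hT
    have hmemT : ∀ (i : Fin n) (x : ℤ × ℤ), x ∈ T i ↔ (x.2, x.1) ∈ S i := by
      intro i x
      simp only [hT, Finset.mem_image]
      constructor
      · rintro ⟨c, hc, rfl⟩
        simpa using hc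
      · intro hx
        exact ⟨(x.2, x.1), hx, rfl⟩
    have hpolyT : ∀ i, IsPolyomino (T i) := by
      intro i
      obtain ⟨⟨c, hc⟩, hconn⟩ := hpoly i
      constructor
      · exact ⟨(c.2, c.1), (hmemT i _).mpr (by simpa using hc)⟩
      · intro a ha b hb
        have h := hconn _ ((hmemT i a).mp ha) _ ((hmemT i b).mp hb)
        refine Relation.ReflTransGen.lift (fun c : ℤ × ℤ => (c.2, c.1))
          (fun x y hxy => ?_) _ _ h
        refine ⟨(hmemT i _).mpr (by simpa using hxy.1),
          (hmemT i _).mpr (by simpa using hxy.2.1), ?_⟩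
        have h3 := hxy.2.2
        show EdgeAdj (x.2, x.1) (y.2, y.1)
        simp only [EdgeAdj] at h3 ⊢
        omega
    have hdisjT : Pairwise fun i j => Disjoint (T i) (T j) := by
      intro i j hij
      rw [Finset.disjoint_left]
      intro x hx hx'
      exact Finset.disjoint_left.mp (hdisj hij) ((hmemT i x).mp hx) ((hmemT j x).mp hx')
    have hymonT : ∀ i, YMonotone (T i) := by
      intro i r a b c h1 h2 hab hbc
      exact (hmemT i _).mpr ((hconv i).1 r a b c ((hmemT i _).mp h1) ((hmemT i _).mp h2) hab hbc)
    obtain ⟨τ, hτ⟩ := UTOAux.UTO_x n T hpolyT hdisjT hymonT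
    refine ⟨τ, fun k l hkl s => ?_⟩
    have h := hτ k l hkl s
    rw [Finset.disjoint_left] at h ⊢
    intro x hx hx'
    simp only [translateBy, Finset.mem_image] at hx
    obtain ⟨c, hc, rfl⟩ := hx
    refine h (a := (c.2 + (s:ℤ), c.1 + 0)) ?_ ?_
    · simp only [translateBy, Finset.mem_image]
      exact ⟨(c.2, c.1), (hmemT _ _).mpr (by simpa using hc), rfl⟩
    · exact (hmemT _ _).mpr hx'
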